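/- Let T₁, T₂ be independent, T_i ~ Gamma(m_i, σ_i) with integer m_i ≥ 1 and 0 < σ₁ ≤ σ₂, and fix p ≠ 0. Let d₀₂ = p⁻¹(1 - e^{-p/(m₂+1)}) and e₂ = p⁻¹(1 - e^{-p/(m₁+m₂+1)}). Define the truncated estimator δ(T₁,T₂) = max{d₀₂, e₂(1 + T₁/T₂)}·T₂. If P(d₀₂ < e₂(1 + T₁/T₂)) > 0, then the linex risk E[exp(p(δ/σ₂ - 1)) - p(δ/σ₂ - 1) - 1] of δ is strictly smaller than that of the unrestricted estimator d₀₂T₂. -/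

import Mathlib

open MeasureTheory ProbabilityTheory Real Set Nat
open scoped ENNReal

noncomputable def linexLoss (p σ₂ x : ℝ) : ℝ :=
  Real.exp (p * (x / σ₂ - 1)) - p * (x / σ₂ - 1) - 1

noncomputable def linexPhi (p σ₂ : ℝ) (k : ℕ) (lam c : ℝ) : ℝ :=
  Real.exp (-p) * k ! / (lam - p * c / σ₂) ^ (k + 1)
    - (p * c / σ₂) * (k + 1)! / lam ^ (k + 2) + (p - 1) * k ! / lam ^ (k + 1)


lemma linex_aux_pos {p a : ℝ} (hp : p ≠ 0) (ha : 0 < a) :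
    0 < p⁻¹ * (1 - Real.exp (-p / a)) := by
  rcases hp.lt_or_gt with h | h
  · have h1 : (1:ℝ) < Real.exp (-p / a) := by
      rw [show (1:ℝ) = Real.exp 0 by simp]
      have : 0 < -p / a := div_pos (by linarith) ha
      exact Real.exp_lt_exp.mpr this
    have : p⁻¹ < 0 := inv_lt_zero.mpr h
    nlinarith
  · have h1 : Real.exp (-p / a) < 1 := by
      rw [Real.exp_lt_one_iff]
      have h2 : 0 < p / a := by positivity
      rw [neg_div]; linarith
    have : 0 < p⁻¹ := inv_pos.mpr h
    nlinarith


lemma linex_aux_lt_one {p a : ℝ} (ha : 0 < a) : p * (p⁻¹ * (1 - Real.exp (-p / a))) < 1 := by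
  rcases eq_or_ne p 0 with rfl | hp
  · simpa using one_pos
  · rw [← mul_assoc, mul_inv_cancel₀ hp, one_mul]
    have := Real.exp_pos (-p / a)
    linarith


lemma integrableOn_pow_mul_exp (k : ℕ) {b : ℝ} (hb : 0 < b) :
    IntegrableOn (fun t : ℝ => t ^ k * Real.exp (-(b * t))) (Set.Ioi 0) := by
  have h := integrableOn_rpow_mul_exp_neg_mul_rpow (s := (k:ℝ)) (p := 1)
    (by exact_mod_cast neg_one_lt_zero.trans_le k.cast_nonneg) zero_lt_one hb
  refine h.congr_fun (fun t ht => ?_) measurableSet_Ioi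
  dsimp only
  rw [Real.rpow_one, Real.rpow_natCast, neg_mul]


lemma integral_pow_mul_exp (k : ℕ) {b : ℝ} (hb : 0 < b) :
    ∫ t in Set.Ioi (0:ℝ), t ^ k * Real.exp (-(b * t)) = k ! / b ^ (k + 1) := by
  have h := Real.integral_rpow_mul_exp_neg_mul_Ioi (a := (k:ℝ) + 1) (by positivity) hb
  have h2 : ∫ t in Set.Ioi (0:ℝ), t ^ ((k:ℝ) + 1 - 1) * Real.exp (-(b * t))
      = ∫ t in Set.Ioi (0:ℝ), t ^ k * Real.exp (-(b * t)) := by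
    refine setIntegral_congr_fun measurableSet_Ioi (fun t ht => ?_)
    rw [add_sub_cancel_right, Real.rpow_natCast]
  rw [h2] at h
  rw [h]
  rw [show ((k:ℝ) + 1) = ((k + 1 : ℕ) : ℝ) by push_cast; ring]
  rw [Real.rpow_natCast, show (((k + 1 : ℕ)) : ℝ) = ((k : ℕ) : ℝ) + 1 by push_cast; ring,
    Real.Gamma_nat_eq_factorial, div_pow, one_pow]
  ring


lemma linex_nonneg (y : ℝ) : 0 ≤ Real.exp y - y - 1 := by
  have := Real.add_one_le_exp y; linarith

lemma linexLoss_nonneg (p σ₂ x : ℝ) : 0 ≤ linexLoss p σ₂ x := linex_nonneg _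

lemma measurable_linexLoss (p σ₂ : ℝ) : Measurable (linexLoss p σ₂) := by
  unfold linexLoss; fun_prop

lemma linex_decomp {p σ₂ : ℝ} (k : ℕ) (lam c t : ℝ) :
    linexLoss p σ₂ (c * t) * (t ^ k * Real.exp (-(lam * t)))
      = Real.exp (-p) * (t ^ k * Real.exp (-((lam - p * c / σ₂) * t)))
        - (p * c / σ₂) * (t ^ (k + 1) * Real.exp (-(lam * t)))
        + (p - 1) * (t ^ k * Real.exp (-(lam * t))) := by
  unfold linexLoss
  have h1 : Real.exp (p * (c * t / σ₂ - 1)) = Real.exp (-p) * Real.exp (p * c / σ₂ * t) := by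
    rw [← Real.exp_add]; ring_nf
  have h2 : Real.exp (-((lam - p * c / σ₂) * t))
      = Real.exp (p * c / σ₂ * t) * Real.exp (-(lam * t)) := by
    rw [← Real.exp_add]; ring_nf
  rw [h1, h2]; ring

lemma linex_integrable {p σ₂ : ℝ} (k : ℕ) {lam c : ℝ} (hlam : 0 < lam) (hs : p * c / σ₂ < lam) :
    IntegrableOn (fun t : ℝ =>
      linexLoss p σ₂ (c * t) * (t ^ k * Real.exp (-(lam * t)))) (Set.Ioi 0) := by
  have h : IntegrableOn (fun t : ℝ =>
      Real.exp (-p) * (t ^ k * Real.exp (-((lam - p * c / σ₂) * t)))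
        - (p * c / σ₂) * (t ^ (k + 1) * Real.exp (-(lam * t)))
        + (p - 1) * (t ^ k * Real.exp (-(lam * t)))) (Set.Ioi 0) := by
    exact (((integrableOn_pow_mul_exp k (by linarith)).const_mul _).sub
      ((integrableOn_pow_mul_exp (k+1) hlam).const_mul _)).add
      ((integrableOn_pow_mul_exp k hlam).const_mul _)
  exact h.congr_fun (fun t _ => (linex_decomp k lam c t).symm) measurableSet_Ioi

lemma linex_integral {p σ₂ : ℝ} (k : ℕ) {lam c : ℝ} (hlam : 0 < lam) (hs : p * c / σ₂ < lam) :
    ∫ t in Set.Ioi (0:ℝ), linexLoss p σ₂ (c * t) * (t ^ k * Real.exp (-(lam * t)))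
      = linexPhi p σ₂ k lam c := by
  rw [setIntegral_congr_fun measurableSet_Ioi (fun t _ => linex_decomp k lam c t)]
  rw [integral_add, integral_sub, integral_const_mul, integral_const_mul, integral_const_mul,
    integral_pow_mul_exp k (by linarith), integral_pow_mul_exp (k+1) hlam,
    integral_pow_mul_exp k hlam]
  · unfold linexPhi
    ring
  · exact (integrableOn_pow_mul_exp k (by linarith)).const_mul _
  · exact (integrableOn_pow_mul_exp (k+1) hlam).const_mul _
  · exact (((integrableOn_pow_mul_exp k (by linarith)).const_mul _).sub
      ((integrableOn_pow_mul_exp (k+1) hlam).const_mul _))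
  · exact (integrableOn_pow_mul_exp k hlam).const_mul _

lemma linexPhi_nonneg {p σ₂ : ℝ} (k : ℕ) {lam c : ℝ} (hlam : 0 < lam) (hs : p * c / σ₂ < lam) :
    0 ≤ linexPhi p σ₂ k lam c := by
  rw [← linex_integral k hlam hs]
  refine setIntegral_nonneg measurableSet_Ioi fun t ht => ?_
  have ht' : (0:ℝ) < t := ht
  have h1 := linexLoss_nonneg p σ₂ (c * t)
  positivity

lemma lintegral_Ioi_scale (f : ℝ → ℝ≥0∞) (hf : Measurable f) {a : ℝ} (ha : 0 < a) :
    ∫⁻ x in Set.Ioi (0:ℝ), f x = ENNReal.ofReal a * ∫⁻ v in Set.Ioi (0:ℝ), f (a * v) := by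
  have hmap : Measure.map (fun v : ℝ => a * v) (volume.restrict (Set.Ioi 0))
      = (ENNReal.ofReal |a⁻¹|) • (volume.restrict (Set.Ioi (0:ℝ))) := by
    have h1 : (fun v : ℝ => a * v) ⁻¹' (Set.Ioi 0) = Set.Ioi 0 := by
      ext x; simp [Set.mem_Ioi, mul_pos_iff_of_pos_left, ha]
    rw [← h1, ← Measure.restrict_map (measurable_const_mul a) measurableSet_Ioi,
      Real.map_volume_mul_left (ne_of_gt ha), h1, Measure.restrict_smul]
  have h2 : ∫⁻ v in Set.Ioi (0:ℝ), f (a * v)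
      = ∫⁻ x, f x ∂(Measure.map (fun v : ℝ => a * v) (volume.restrict (Set.Ioi 0))) := by
    rw [lintegral_map hf (measurable_const_mul a)]
  rw [h2, hmap, lintegral_smul_measure, smul_eq_mul]
  rw [abs_of_pos (inv_pos.mpr ha), ← mul_assoc, ← ENNReal.ofReal_mul (le_of_lt ha),
    mul_inv_cancel₀ (ne_of_gt ha), ENNReal.ofReal_one, one_mul]


lemma linex_deriv_neg (k : ℕ) {p q lam X : ℝ} (hlam : 0 < lam) (hX : 0 < X) (hq0 : q ≠ 0)
    (hgt : 0 < q → lam * Real.exp (-p / (k + 2)) < X)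
    (hlt : q < 0 → X < lam * Real.exp (-p / (k + 2))) :
    Real.exp (-p) * k ! * (-(((k:ℝ) + 1) * X ^ k * (-q)) / (X ^ (k + 1)) ^ 2)
      - q * ((k + 1)! : ℕ) / lam ^ (k + 2) < 0 := by
  have hXne : X ≠ 0 := ne_of_gt hX
  have hlamne : lam ≠ 0 := ne_of_gt hlam
  have hYpow : (lam * Real.exp (-p / (k + 2))) ^ (k + 2) = lam ^ (k + 2) * Real.exp (-p) := by
    rw [mul_pow, ← Real.exp_nat_mul]
    congr 2
    push_cast
    field_simp
  have hXk2 : (0:ℝ) < X ^ (k + 2) := by positivity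
  have hlamk2 : (0:ℝ) < lam ^ (k + 2) := by positivity
  have hfact : (((k + 1)! : ℕ) : ℝ) = ((k:ℝ) + 1) * k ! := by
    push_cast [Nat.factorial_succ]; ring
  have hsimp : Real.exp (-p) * k ! * (-(((k:ℝ) + 1) * X ^ k * (-q)) / (X ^ (k + 1)) ^ 2)
      - q * ((k + 1)! : ℕ) / lam ^ (k + 2)
      = ((k:ℝ) + 1) * k ! * (q * (Real.exp (-p) / X ^ (k + 2) - 1 / lam ^ (k + 2))) := by
    rw [hfact]
    have h1 : (X ^ (k + 1)) ^ 2 = X ^ k * X ^ (k + 2) := by ring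
    rw [h1]
    field_simp
  rw [hsimp]
  have hkpos : (0:ℝ) < ((k:ℝ) + 1) * k ! := by positivity
  refine mul_neg_of_pos_of_neg hkpos ?_
  rcases lt_or_gt_of_ne hq0 with hqneg | hqpos
  · have hXlt := hlt hqneg
    have hpow : X ^ (k + 2) < (lam * Real.exp (-p / (k + 2))) ^ (k + 2) :=
      pow_lt_pow_left₀ hXlt hX.le (by omega)
    rw [hYpow] at hpow
    have hbr : 0 < Real.exp (-p) / X ^ (k + 2) - 1 / lam ^ (k + 2) := by
      rw [sub_pos, div_lt_div_iff₀ hlamk2 hXk2]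
      nlinarith
    exact mul_neg_of_neg_of_pos hqneg hbr
  · have hXgt := hgt hqpos
    have hpow : (lam * Real.exp (-p / (k + 2))) ^ (k + 2) < X ^ (k + 2) :=
      pow_lt_pow_left₀ hXgt (by positivity) (by omega)
    rw [hYpow] at hpow
    have hbr : Real.exp (-p) / X ^ (k + 2) - 1 / lam ^ (k + 2) < 0 := by
      rw [sub_neg, div_lt_div_iff₀ hXk2 hlamk2]
      nlinarith
    exact mul_neg_of_pos_of_neg hqpos hbr


lemma linexPhi_strict {p σ₂ : ℝ} (hp : p ≠ 0) (hσ₂ : 0 < σ₂) (k : ℕ) {lam c₁ c₂ : ℝ}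
    (hlam : 0 < lam) (h1 : p * c₁ / σ₂ < lam) (h12 : c₁ < c₂)
    (h2 : c₂ ≤ σ₂ * lam * (p⁻¹ * (1 - Real.exp (-p / (k + 2))))) :
    linexPhi p σ₂ k lam c₂ < linexPhi p σ₂ k lam c₁ := by
  set q : ℝ := p / σ₂ with hq
  have hq0 : q ≠ 0 := div_ne_zero hp (ne_of_gt hσ₂)
  set E : ℝ := Real.exp (-p / (k + 2)) with hE
  set cstar : ℝ := σ₂ * lam * (p⁻¹ * (1 - E)) with hcstar
  have hFeq : ∀ c, linexPhi p σ₂ k lam c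
      = (Real.exp (-p) * k !) * ((lam - q * c) ^ (k + 1))⁻¹
        - (q * ((k + 1)! : ℕ) / lam ^ (k + 2)) * c + (p - 1) * k ! / lam ^ (k + 1) := by
    intro c; unfold linexPhi; rw [hq]; ring
  have hqstar : q * cstar = lam * (1 - E) := by
    rw [hcstar, hq]; field_simp
  have hc1star : c₁ < cstar := lt_of_lt_of_le h12 h2
  have hXc1 : 0 < lam - q * c₁ := by
    have : q * c₁ = p * c₁ / σ₂ := by rw [hq]; ring
    linarith
  have hEpos : 0 < E := Real.exp_pos _
  have hXstar : 0 < lam - q * cstar := by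
    rw [hqstar]; nlinarith [mul_pos hlam hEpos]
  have Xpos : ∀ c ∈ Icc c₁ cstar, 0 < lam - q * c := by
    intro c hc
    have key : (lam - q * c) * (cstar - c₁)
        = (lam - q * c₁) * (cstar - c) + (lam - q * cstar) * (c - c₁) := by ring
    rcases eq_or_lt_of_le hc.1 with rfl | hlt
    · exact hXc1
    · nlinarith [hc.2, mul_pos hXstar (sub_pos.mpr hlt),
        mul_nonneg hXc1.le (sub_nonneg.mpr hc.2)]
  have hderiv : ∀ c, 0 < lam - q * c →
      HasDerivAt (fun c => linexPhi p σ₂ k lam c)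
        ((Real.exp (-p) * k !) * (-(((k:ℝ) + 1) * (lam - q * c) ^ k * (-q)) /
            ((lam - q * c) ^ (k + 1)) ^ 2) - q * ((k + 1)! : ℕ) / lam ^ (k + 2)) c := by
    intro c hX
    have hd1 : HasDerivAt (fun c : ℝ => lam - q * c) (-q) c := by
      simpa using ((hasDerivAt_id c).const_mul q).const_sub lam
    have hd2 : HasDerivAt (fun c : ℝ => (lam - q * c) ^ (k + 1))
        ((((k:ℝ) + 1)) * (lam - q * c) ^ k * (-q)) c := by
      have := hd1.fun_pow (k + 1)
      simpa using this
    have hd3 := hd2.inv (by positivity)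
    have hb : HasDerivAt (fun c : ℝ => (q * ((k + 1)! : ℕ) / lam ^ (k + 2)) * c)
        (q * ((k + 1)! : ℕ) / lam ^ (k + 2)) c := by
      simpa using (hasDerivAt_id c).const_mul (q * ((k + 1)! : ℕ) / lam ^ (k + 2))
    have hd4 := ((hd3.const_mul (Real.exp (-p) * (k ! : ℕ))).sub hb).add_const
      ((p - 1) * k ! / lam ^ (k + 1))
    exact (funext hFeq : (fun c => linexPhi p σ₂ k lam c) = _) ▸ hd4
  have hanti : StrictAntiOn (fun c => linexPhi p σ₂ k lam c) (Icc c₁ cstar) := by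
    apply strictAntiOn_of_deriv_neg (convex_Icc _ _)
    · intro c hc
      exact (hderiv c (Xpos c hc)).continuousAt.continuousWithinAt
    · intro c hc
      rw [interior_Icc] at hc
      have hX : 0 < lam - q * c := Xpos c ⟨hc.1.le, hc.2.le⟩
      rw [(hderiv c hX).deriv]
      have hXY : (lam - q * c) - lam * E = q * (cstar - c) := by
        have : q * cstar = lam * (1 - E) := hqstar
        nlinarith [this]
      refine linex_deriv_neg k hlam hX hq0 (fun hqpos => ?_) (fun hqneg => ?_)
      · nlinarith [mul_pos hqpos (sub_pos.mpr hc.2)]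
      · nlinarith [mul_pos (neg_pos.mpr hqneg) (sub_pos.mpr hc.2)]
  exact hanti ⟨le_refl _, hc1star.le⟩ ⟨h12.le, h2⟩ h12


lemma measurable_gammaPDF' (a r : ℝ) : Measurable (gammaPDF a r) :=
  (measurable_gammaPDFReal a r).ennreal_ofReal


lemma gammaMeasure_lintegral (a r : ℝ) {f : ℝ → ℝ≥0∞} (hf : Measurable f) :
    ∫⁻ x, f x ∂(gammaMeasure a r) = ∫⁻ x in Set.Ioi 0, gammaPDF a r x * f x := by
  rw [gammaMeasure, lintegral_withDensity_eq_lintegral_mul _ (measurable_gammaPDF' a r) hf]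
  rw [← lintegral_add_compl (fun x => (gammaPDF a r * f) x) measurableSet_Ioi]
  have h0 : ∫⁻ x in (Set.Ioi (0:ℝ))ᶜ, (gammaPDF a r * f) x = 0 := by
    rw [compl_Ioi, ← setLIntegral_congr (Iio_ae_eq_Iic (a := (0:ℝ)))]
    rw [setLIntegral_congr_fun (g := fun _ => (0:ℝ≥0∞)) measurableSet_Iio
      (fun x (hx : x < 0) => by
        simp [Pi.mul_apply, gammaPDF_of_neg hx])]
    simp
  rw [h0, add_zero]
  rfl


lemma gammaMeasure_Iic (a r : ℝ) : gammaMeasure a r (Set.Iic 0) = 0 := by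
  rw [gammaMeasure, withDensity_apply _ measurableSet_Iic,
    ← setLIntegral_congr (Iio_ae_eq_Iic (a := (0:ℝ)))]
  exact lintegral_gammaPDF_of_nonpos le_rfl


lemma gammaPDFReal_succ (kk : ℕ) (r t : ℝ) (ht : 0 ≤ t) :
    gammaPDFReal (kk + 1 : ℕ) r t = r ^ (kk + 1) / (kk)! * t ^ kk * Real.exp (-(r * t)) := by
  rw [gammaPDFReal, if_pos ht]
  have h1 : r ^ (((kk + 1 : ℕ)) : ℝ) = r ^ (kk + 1) := Real.rpow_natCast r (kk + 1)
  have h2 : (((kk + 1 : ℕ)) : ℝ) - 1 = ((kk : ℕ) : ℝ) := by push_cast; ring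
  have h3 : Real.Gamma ((kk + 1 : ℕ) : ℝ) = (kk)! := by
    rw [show (((kk + 1 : ℕ)) : ℝ) = ((kk : ℕ) : ℝ) + 1 by push_cast; ring,
      Real.Gamma_nat_eq_factorial]
  rw [h1, h2, Real.rpow_natCast, h3]


-- Corollary 2.3(ii) for `k = 2`.
set_option maxHeartbeats 2000000 in
theorem truncated_estimator_dominates (Ω : Type*) [MeasurableSpace Ω]
    (P : Measure Ω) [IsProbabilityMeasure P]
    (m₁ m₂ : ℕ) (hm₁ : 1 ≤ m₁) (hm₂ : 1 ≤ m₂)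
    (σ₁ σ₂ p : ℝ) (hσ₁ : 0 < σ₁) (hσ : σ₁ ≤ σ₂) (hp : p ≠ 0)
    (T₁ T₂ : Ω → ℝ) (hT₁ : Measurable T₁) (hT₂ : Measurable T₂)
    (hindep : IndepFun T₁ T₂ P)
    (hlaw₁ : Measure.map T₁ P = gammaMeasure m₁ (1 / σ₁))
    (hlaw₂ : Measure.map T₂ P = gammaMeasure m₂ (1 / σ₂)) :
    let d₀₂ : ℝ := p⁻¹ * (1 - Real.exp (-p / (m₂ + 1)))
    let e₂ : ℝ := p⁻¹ * (1 - Real.exp (-p / (m₁ + m₂ + 1)))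
    let δ : Ω → ℝ := fun ω => max d₀₂ (e₂ * (1 + T₁ ω / T₂ ω)) * T₂ ω
    0 < P {ω | d₀₂ < e₂ * (1 + T₁ ω / T₂ ω)} →
    ∫ ω, (Real.exp (p * (δ ω / σ₂ - 1)) - p * (δ ω / σ₂ - 1) - 1) ∂P <
      ∫ ω, (Real.exp (p * (d₀₂ * T₂ ω / σ₂ - 1)) - p * (d₀₂ * T₂ ω / σ₂ - 1) - 1) ∂P := by
  intro d₀₂ e₂ δ hpos
  show (∫ ω, linexLoss p σ₂ (max d₀₂ (e₂ * (1 + T₁ ω / T₂ ω)) * T₂ ω) ∂P)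
      < ∫ ω, linexLoss p σ₂ (d₀₂ * T₂ ω) ∂P
  clear_value δ
  clear δ
  obtain ⟨k₁, rfl⟩ : ∃ kk, m₁ = kk + 1 := ⟨m₁ - 1, by omega⟩
  obtain ⟨k₂, rfl⟩ : ∃ kk, m₂ = kk + 1 := ⟨m₂ - 1, by omega⟩
  have hσ₂ : 0 < σ₂ := hσ₁.trans_le hσ
  have hr₁ : 0 < 1 / σ₁ := by positivity
  have hr₂ : 0 < 1 / σ₂ := by positivity
  have hd02 : d₀₂ = p⁻¹ * (1 - Real.exp (-p / ((k₂ : ℝ) + 2))) := by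
    show p⁻¹ * (1 - Real.exp (-p / (((k₂ + 1 : ℕ) : ℝ) + 1))) = _
    push_cast
    ring_nf
  have he2 : e₂ = p⁻¹ * (1 - Real.exp (-p / (((k₁ + k₂ + 1 : ℕ) : ℝ) + 2))) := by
    show p⁻¹ * (1 - Real.exp (-p / (((k₁ + 1 : ℕ) : ℝ) + ((k₂ + 1 : ℕ) : ℝ) + 1))) = _
    push_cast
    ring_nf
  clear_value d₀₂ e₂
  have hd0pos : 0 < d₀₂ := by rw [hd02]; exact linex_aux_pos hp (by positivity)
  have he2pos : 0 < e₂ := by rw [he2]; exact linex_aux_pos hp (by positivity)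
  have hpd : p * d₀₂ < 1 := by rw [hd02]; exact linex_aux_lt_one (by positivity)
  have hpe : p * e₂ < 1 := by rw [he2]; exact linex_aux_lt_one (by positivity)
  set lam : ℝ → ℝ := fun v => 1 / σ₂ + 1 / σ₁ * v with hlamdef
  clear_value lam
  have hlampos : ∀ v : ℝ, 0 < v → 0 < lam v := fun v hv => by
    have := mul_pos hr₁ hv; simp only [hlamdef]; linarith
  have hlamσ : ∀ v : ℝ, σ₂ * lam v = 1 + σ₂ / σ₁ * v := by
    intro v; simp only [hlamdef]; field_simp
  have hσσ : (1:ℝ) ≤ σ₂ / σ₁ := (one_le_div hσ₁).mpr hσ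
  have hdomd : ∀ v : ℝ, 0 < v → p * d₀₂ / σ₂ < lam v := by
    intro v hv
    have h1 : p * d₀₂ / σ₂ < 1 / σ₂ := by
      rw [div_lt_div_iff₀ hσ₂ hσ₂]; nlinarith
    have := mul_pos hr₁ hv
    simp only [hlamdef]; linarith
  have hdome : ∀ v : ℝ, 0 < v → p * (e₂ * (1 + v)) / σ₂ < lam v := by
    intro v hv
    rw [div_lt_iff₀ hσ₂]
    have h2 : p * e₂ * (1 + v) < 1 + v := by nlinarith
    have h3 : lam v * σ₂ = 1 + σ₂ / σ₁ * v := by rw [mul_comm]; exact hlamσ v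
    have h4 : v ≤ σ₂ / σ₁ * v := by nlinarith
    have h5 : p * (e₂ * (1 + v)) = p * e₂ * (1 + v) := by ring
    nlinarith [h2, h3, h4, h5]
  have hdomκ : ∀ v : ℝ, 0 < v → p * max d₀₂ (e₂ * (1 + v)) / σ₂ < lam v := by
    intro v hv
    rcases max_choice d₀₂ (e₂ * (1 + v)) with h | h <;> rw [h]
    exacts [hdomd v hv, hdome v hv]
  have hstar : ∀ v : ℝ, 0 < v →
      e₂ * (1 + v) ≤ σ₂ * lam v * (p⁻¹ * (1 - Real.exp (-p / (((k₁ + k₂ + 1 : ℕ) : ℝ) + 2)))) := by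
    intro v hv
    rw [hlamσ v, ← he2]
    nlinarith [mul_nonneg (mul_nonneg he2pos.le hv.le) (sub_nonneg.mpr hσσ)]
  have hLm := measurable_linexLoss p σ₂
  have hkey : ∀ κ : ℝ → ℝ, Measurable κ → (∀ v : ℝ, 0 < v → p * κ v / σ₂ < lam v) →
      ∫⁻ ω, ENNReal.ofReal (linexLoss p σ₂ (κ (T₁ ω / T₂ ω) * T₂ ω)) ∂P
        = ∫⁻ v in Set.Ioi 0,
            ENNReal.ofReal ((1/σ₁) ^ (k₁+1) * (1/σ₂) ^ (k₂+1) / ((k₁)! * (k₂)!) * v ^ k₁)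
              * ENNReal.ofReal (linexPhi p σ₂ (k₁+k₂+1) (lam v) (κ v)) := by
    intro κ hκ hdom
    haveI inst1 : IsProbabilityMeasure (gammaMeasure (↑(k₁+1) : ℝ) (1/σ₁)) :=
      isProbabilityMeasure_gammaMeasure (by positivity) hr₁
    haveI inst2 : IsProbabilityMeasure (gammaMeasure (↑(k₂+1) : ℝ) (1/σ₂)) :=
      isProbabilityMeasure_gammaMeasure (by positivity) hr₂
    have hmap : Measure.map (fun ω => (T₁ ω, T₂ ω)) P
        = (gammaMeasure (↑(k₁+1) : ℝ) (1/σ₁)).prod (gammaMeasure (↑(k₂+1) : ℝ) (1/σ₂)) := by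
      rw [← hlaw₁, ← hlaw₂]
      exact (indepFun_iff_map_prod_eq_prod_map_map hT₁.aemeasurable hT₂.aemeasurable).mp hindep
    have hgm : Measurable (fun z : ℝ × ℝ => ENNReal.ofReal (linexLoss p σ₂ (κ (z.1 / z.2) * z.2))) :=
      (hLm.comp ((hκ.comp (measurable_fst.div measurable_snd)).mul measurable_snd)).ennreal_ofReal
    have step1 : ∫⁻ ω, ENNReal.ofReal (linexLoss p σ₂ (κ (T₁ ω / T₂ ω) * T₂ ω)) ∂P
        = ∫⁻ z : ℝ × ℝ, ENNReal.ofReal (linexLoss p σ₂ (κ (z.1 / z.2) * z.2))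
            ∂((gammaMeasure (↑(k₁+1) : ℝ) (1/σ₁)).prod (gammaMeasure (↑(k₂+1) : ℝ) (1/σ₂))) := by
      rw [← hmap, lintegral_map hgm (hT₁.prodMk hT₂)]
    have hinner1 : ∀ t₂ : ℝ, Measurable (fun t₁ => ENNReal.ofReal (linexLoss p σ₂ (κ (t₁ / t₂) * t₂))) := fun t₂ =>
      (hLm.comp ((hκ.comp (measurable_id.div_const t₂)).mul_const t₂)).ennreal_ofReal
    have hGm : Measurable (Function.uncurry (fun t₂ t₁ : ℝ =>
        gammaPDF (↑(k₁+1) : ℝ) (1/σ₁) t₁ * ENNReal.ofReal (linexLoss p σ₂ (κ (t₁ / t₂) * t₂)))) := by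
      apply Measurable.fun_mul
      · exact (measurable_gammaPDF' _ _).comp measurable_snd
      · exact (hLm.comp ((hκ.comp (measurable_snd.div measurable_fst)).mul measurable_fst)).ennreal_ofReal
    have step2 : ∫⁻ z : ℝ × ℝ, ENNReal.ofReal (linexLoss p σ₂ (κ (z.1 / z.2) * z.2))
            ∂((gammaMeasure (↑(k₁+1) : ℝ) (1/σ₁)).prod (gammaMeasure (↑(k₂+1) : ℝ) (1/σ₂)))
        = ∫⁻ t₂ in Set.Ioi 0, gammaPDF (↑(k₂+1) : ℝ) (1/σ₂) t₂ *
            ∫⁻ t₁ in Set.Ioi 0, gammaPDF (↑(k₁+1) : ℝ) (1/σ₁) t₁ *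
              ENNReal.ofReal (linexLoss p σ₂ (κ (t₁ / t₂) * t₂)) := by
      rw [lintegral_prod_symm _ hgm.aemeasurable]
      rw [lintegral_congr (fun t₂ => gammaMeasure_lintegral _ _ (hinner1 t₂))]
      exact gammaMeasure_lintegral _ _ (hGm.lintegral_prod_right)
    have step3 : ∀ t₂ : ℝ, t₂ ∈ Set.Ioi (0:ℝ) →
        gammaPDF (↑(k₂+1) : ℝ) (1/σ₂) t₂ *
            ∫⁻ t₁ in Set.Ioi 0, gammaPDF (↑(k₁+1) : ℝ) (1/σ₁) t₁ *
              ENNReal.ofReal (linexLoss p σ₂ (κ (t₁ / t₂) * t₂))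
          = ∫⁻ v in Set.Ioi 0, gammaPDF (↑(k₂+1) : ℝ) (1/σ₂) t₂ * ENNReal.ofReal t₂ *
              (gammaPDF (↑(k₁+1) : ℝ) (1/σ₁) (t₂ * v) *
                ENNReal.ofReal (linexLoss p σ₂ (κ v * t₂))) := by
      intro t₂ ht₂
      have ht₂' : (0:ℝ) < t₂ := ht₂
      rw [lintegral_Ioi_scale _ ((measurable_gammaPDF' _ _).fun_mul (hinner1 t₂)) ht₂']
      rw [setLIntegral_congr_fun measurableSet_Ioi (fun v hv => by
        rw [mul_div_cancel_left₀ _ (ne_of_gt ht₂')])]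
      have hpdfne : gammaPDF (↑(k₂+1) : ℝ) (1/σ₂) t₂ ≠ ⊤ := by
        rw [gammaPDF_eq]; exact ENNReal.ofReal_ne_top
      rw [← mul_assoc, ← lintegral_const_mul'
        (gammaPDF (↑(k₂+1) : ℝ) (1/σ₂) t₂ * ENNReal.ofReal t₂) _
        (ENNReal.mul_ne_top hpdfne ENNReal.ofReal_ne_top)]
    have step4 : ∫⁻ t₂ in Set.Ioi 0, ∫⁻ v in Set.Ioi 0,
          gammaPDF (↑(k₂+1) : ℝ) (1/σ₂) t₂ * ENNReal.ofReal t₂ *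
            (gammaPDF (↑(k₁+1) : ℝ) (1/σ₁) (t₂ * v) *
              ENNReal.ofReal (linexLoss p σ₂ (κ v * t₂)))
        = ∫⁻ v in Set.Ioi 0, ∫⁻ t₂ in Set.Ioi 0,
            gammaPDF (↑(k₂+1) : ℝ) (1/σ₂) t₂ * ENNReal.ofReal t₂ *
              (gammaPDF (↑(k₁+1) : ℝ) (1/σ₁) (t₂ * v) *
                ENNReal.ofReal (linexLoss p σ₂ (κ v * t₂))) := by
      apply lintegral_lintegral_swap
      apply Measurable.aemeasurable
      apply Measurable.fun_mul
      · exact (((measurable_gammaPDF' _ _).comp measurable_fst).mul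
          (measurable_fst.ennreal_ofReal))
      · exact (((measurable_gammaPDF' _ _).comp (measurable_fst.mul measurable_snd)).mul
          ((hLm.comp ((hκ.comp measurable_snd).mul measurable_fst)).ennreal_ofReal))
    have step5 : ∀ v : ℝ, v ∈ Set.Ioi (0:ℝ) →
        ∫⁻ t₂ in Set.Ioi 0,
            gammaPDF (↑(k₂+1) : ℝ) (1/σ₂) t₂ * ENNReal.ofReal t₂ *
              (gammaPDF (↑(k₁+1) : ℝ) (1/σ₁) (t₂ * v) *
                ENNReal.ofReal (linexLoss p σ₂ (κ v * t₂)))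
          = ENNReal.ofReal ((1/σ₁) ^ (k₁+1) * (1/σ₂) ^ (k₂+1) / ((k₁)! * (k₂)!) * v ^ k₁)
              * ENNReal.ofReal (linexPhi p σ₂ (k₁+k₂+1) (lam v) (κ v)) := by
      intro v hv
      have hv' : (0:ℝ) < v := hv
      have heq : ∀ t : ℝ, t ∈ Set.Ioi (0:ℝ) →
          gammaPDF (↑(k₂+1) : ℝ) (1/σ₂) t * ENNReal.ofReal t *
              (gammaPDF (↑(k₁+1) : ℝ) (1/σ₁) (t * v) *
                ENNReal.ofReal (linexLoss p σ₂ (κ v * t)))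
            = ENNReal.ofReal ((1/σ₁) ^ (k₁+1) * (1/σ₂) ^ (k₂+1) / ((k₁)! * (k₂)!) * v ^ k₁)
                * ENNReal.ofReal (linexLoss p σ₂ (κ v * t) *
                    (t ^ (k₁+k₂+1) * Real.exp (-(lam v * t)))) := by
        intro t ht
        have ht' : (0:ℝ) < t := ht
        have h1 : gammaPDF (↑(k₂+1) : ℝ) (1/σ₂) t * ENNReal.ofReal t
            = ENNReal.ofReal (gammaPDFReal (↑(k₂+1) : ℝ) (1/σ₂) t * t) :=
          (ENNReal.ofReal_mul (gammaPDFReal_nonneg (by positivity) hr₂ t)).symm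
        have h2 : gammaPDF (↑(k₁+1) : ℝ) (1/σ₁) (t * v) *
              ENNReal.ofReal (linexLoss p σ₂ (κ v * t))
            = ENNReal.ofReal (gammaPDFReal (↑(k₁+1) : ℝ) (1/σ₁) (t * v) *
                linexLoss p σ₂ (κ v * t)) :=
          (ENNReal.ofReal_mul (gammaPDFReal_nonneg (by positivity) hr₁ _)).symm
        rw [h1, h2,
          ← ENNReal.ofReal_mul (mul_nonneg (gammaPDFReal_nonneg (by positivity) hr₂ t) ht'.le),
          ← ENNReal.ofReal_mul (mul_nonneg
            (by positivity : (0:ℝ) ≤ (1/σ₁) ^ (k₁+1) * (1/σ₂) ^ (k₂+1) / ((k₁)! * (k₂)!))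
            (pow_nonneg hv'.le k₁))]
        congr 1
        rw [gammaPDFReal_succ k₂ _ _ ht'.le, gammaPDFReal_succ k₁ _ _ (by positivity)]
        rw [show Real.exp (-(lam v * t))
            = Real.exp (-(1/σ₂ * t)) * Real.exp (-(1/σ₁ * (t * v))) from by
          rw [← Real.exp_add, hlamdef]; congr 1; ring]
        ring
      rw [setLIntegral_congr_fun measurableSet_Ioi heq,
        lintegral_const_mul' _ _ ENNReal.ofReal_ne_top]
      congr 1
      rw [← ofReal_integral_eq_lintegral_ofReal
        (linex_integrable (k₁+k₂+1) (hlampos v hv') (hdom v hv'))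
        ((ae_restrict_iff' measurableSet_Ioi).mpr (ae_of_all _ (fun t ht => by
          have ht' : (0:ℝ) < t := ht
          have := linexLoss_nonneg p σ₂ (κ v * t)
          positivity)))]
      rw [linex_integral (k₁+k₂+1) (hlampos v hv') (hdom v hv')]
    rw [step1, step2, setLIntegral_congr_fun measurableSet_Ioi step3, step4,
      setLIntegral_congr_fun measurableSet_Ioi step5]
  -- domination for the constant coefficient with lam := 1/σ₂ itself
  have hdomd0 : p * d₀₂ / σ₂ < 1/σ₂ := by
    rw [div_lt_div_iff₀ hσ₂ hσ₂]; nlinarith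
  -- finiteness of the reference risk
  have hfin : ∫⁻ ω, ENNReal.ofReal (linexLoss p σ₂ (d₀₂ * T₂ ω)) ∂P ≠ ⊤ := by
    have hm : Measurable (fun t : ℝ => ENNReal.ofReal (linexLoss p σ₂ (d₀₂ * t))) :=
      (hLm.comp (measurable_id.const_mul d₀₂)).ennreal_ofReal
    have h1 : ∫⁻ ω, ENNReal.ofReal (linexLoss p σ₂ (d₀₂ * T₂ ω)) ∂P
        = ∫⁻ t, ENNReal.ofReal (linexLoss p σ₂ (d₀₂ * t)) ∂(gammaMeasure (↑(k₂+1) : ℝ) (1/σ₂)) := by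
      rw [← hlaw₂, lintegral_map hm hT₂]
    rw [h1, gammaMeasure_lintegral _ _ hm]
    have heq2 : ∀ t : ℝ, t ∈ Set.Ioi (0:ℝ) →
        gammaPDF (↑(k₂+1) : ℝ) (1/σ₂) t * ENNReal.ofReal (linexLoss p σ₂ (d₀₂ * t))
          = ENNReal.ofReal ((1/σ₂) ^ (k₂+1) / (k₂)!)
              * ENNReal.ofReal (linexLoss p σ₂ (d₀₂ * t) * (t ^ k₂ * Real.exp (-(1/σ₂ * t)))) := by
      intro t ht
      have ht' : (0:ℝ) < t := ht
      have h2 : gammaPDF (↑(k₂+1) : ℝ) (1/σ₂) t * ENNReal.ofReal (linexLoss p σ₂ (d₀₂ * t))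
          = ENNReal.ofReal (gammaPDFReal (↑(k₂+1) : ℝ) (1/σ₂) t * linexLoss p σ₂ (d₀₂ * t)) :=
        (ENNReal.ofReal_mul (gammaPDFReal_nonneg (by positivity) hr₂ t)).symm
      rw [h2, ← ENNReal.ofReal_mul (by positivity)]
      congr 1
      rw [gammaPDFReal_succ k₂ _ _ ht'.le]
      ring
    rw [setLIntegral_congr_fun measurableSet_Ioi heq2,
      lintegral_const_mul' _ _ ENNReal.ofReal_ne_top]
    rw [← ofReal_integral_eq_lintegral_ofReal (linex_integrable k₂ hr₂ hdomd0)
      ((ae_restrict_iff' measurableSet_Ioi).mpr (ae_of_all _ (fun t ht => by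
        have ht' : (0:ℝ) < t := ht
        have := linexLoss_nonneg p σ₂ (d₀₂ * t)
        positivity)))]
    exact ENNReal.mul_ne_top ENNReal.ofReal_ne_top ENNReal.ofReal_ne_top
  -- existence of an active point v₀ > 0
  have hT₁pos : ∀ᵐ ω ∂P, 0 < T₁ ω := by
    have h0 : P (T₁ ⁻¹' (Set.Iic 0)) = 0 := by
      rw [← Measure.map_apply hT₁ measurableSet_Iic, hlaw₁, gammaMeasure_Iic]
    refine (MeasureTheory.ae_iff).mpr ?_
    simpa [not_lt, Set.preimage, Set.Iic] using h0
  have hT₂pos : ∀ᵐ ω ∂P, 0 < T₂ ω := by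
    have h0 : P (T₂ ⁻¹' (Set.Iic 0)) = 0 := by
      rw [← Measure.map_apply hT₂ measurableSet_Iic, hlaw₂, gammaMeasure_Iic]
    refine (MeasureTheory.ae_iff).mpr ?_
    simpa [not_lt, Set.preimage, Set.Iic] using h0
  obtain ⟨ω₀, hω₀S, hω₀1, hω₀2⟩ :
      ∃ ω, (d₀₂ < e₂ * (1 + T₁ ω / T₂ ω)) ∧ 0 < T₁ ω ∧ 0 < T₂ ω := by
    have hGnull : P ({ω | 0 < T₁ ω ∧ 0 < T₂ ω}ᶜ) = 0 := by
      have h := hT₁pos.and hT₂pos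
      rw [MeasureTheory.ae_iff] at h
      exact h
    have hne : P ({ω | d₀₂ < e₂ * (1 + T₁ ω / T₂ ω)} ∩ {ω | 0 < T₁ ω ∧ 0 < T₂ ω}) ≠ 0 := by
      intro hz
      have hle := measure_le_inter_add_diff P {ω | d₀₂ < e₂ * (1 + T₁ ω / T₂ ω)}
        {ω | 0 < T₁ ω ∧ 0 < T₂ ω}
      have hdiff : P ({ω | d₀₂ < e₂ * (1 + T₁ ω / T₂ ω)} \ {ω | 0 < T₁ ω ∧ 0 < T₂ ω}) = 0 :=
        le_antisymm (le_trans (measure_mono (Set.diff_subset_compl _ _)) hGnull.le) bot_le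
      rw [hz, hdiff, zero_add] at hle
      exact absurd (le_antisymm hle bot_le) (ne_of_gt hpos)
    obtain ⟨ω₀, hmem⟩ := nonempty_of_measure_ne_zero hne
    exact ⟨ω₀, hmem.1, hmem.2.1, hmem.2.2⟩
  have hv₀ : 0 < T₁ ω₀ / T₂ ω₀ := div_pos hω₀1 hω₀2
  -- the two risk representations
  have hκδm : Measurable (fun v : ℝ => max d₀₂ (e₂ * (1 + v))) :=
    measurable_const.max ((measurable_id.const_add 1).const_mul e₂)
  have hEδ := hkey (fun v => max d₀₂ (e₂ * (1 + v))) hκδm (fun v hv => hdomκ v hv)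
  have hE0 := hkey (fun _ => d₀₂) measurable_const (fun v hv => hdomd v hv)
  -- strict inequality between the v-integrals
  have hlt : (∫⁻ v in Set.Ioi 0,
        ENNReal.ofReal ((1/σ₁) ^ (k₁+1) * (1/σ₂) ^ (k₂+1) / ((k₁)! * (k₂)!) * v ^ k₁)
          * ENNReal.ofReal (linexPhi p σ₂ (k₁+k₂+1) (lam v) (max d₀₂ (e₂ * (1 + v)))))
      < ∫⁻ v in Set.Ioi 0,
        ENNReal.ofReal ((1/σ₁) ^ (k₁+1) * (1/σ₂) ^ (k₂+1) / ((k₁)! * (k₂)!) * v ^ k₁)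
          * ENNReal.ofReal (linexPhi p σ₂ (k₁+k₂+1) (lam v) d₀₂) := by
    have h_le : (fun v => ENNReal.ofReal ((1/σ₁) ^ (k₁+1) * (1/σ₂) ^ (k₂+1) / ((k₁)! * (k₂)!) * v ^ k₁)
          * ENNReal.ofReal (linexPhi p σ₂ (k₁+k₂+1) (lam v) (max d₀₂ (e₂ * (1 + v)))))
        ≤ᵐ[volume.restrict (Set.Ioi 0)]
        (fun v => ENNReal.ofReal ((1/σ₁) ^ (k₁+1) * (1/σ₂) ^ (k₂+1) / ((k₁)! * (k₂)!) * v ^ k₁)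
          * ENNReal.ofReal (linexPhi p σ₂ (k₁+k₂+1) (lam v) d₀₂)) := by
      refine (ae_restrict_iff' measurableSet_Ioi).mpr (ae_of_all _ (fun v hv => ?_))
      have hv' : (0:ℝ) < v := hv
      refine mul_le_mul_right (ENNReal.ofReal_le_ofReal ?_) _
      rcases lt_or_ge d₀₂ (e₂ * (1 + v)) with hl | hl
      · rw [max_eq_right hl.le]
        exact (linexPhi_strict hp hσ₂ (k₁+k₂+1) (hlampos v hv') (hdomd v hv') hl
          (hstar v hv')).le
      · rw [max_eq_left hl]
    have hgmeas : AEMeasurable (fun v =>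
        ENNReal.ofReal ((1/σ₁) ^ (k₁+1) * (1/σ₂) ^ (k₂+1) / ((k₁)! * (k₂)!) * v ^ k₁)
          * ENNReal.ofReal (linexPhi p σ₂ (k₁+k₂+1) (lam v) d₀₂))
        (volume.restrict (Set.Ioi 0)) := by
      apply Measurable.aemeasurable
      have hlamm : Measurable lam := by
        rw [hlamdef]; exact (measurable_id.const_mul _).const_add _
      apply Measurable.fun_mul
      · exact ((measurable_id.pow_const k₁).const_mul _).ennreal_ofReal
      · refine Measurable.ennreal_ofReal ?_
        unfold linexPhi
        exact ((measurable_const.div ((hlamm.sub measurable_const).pow_const _)).sub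
          (measurable_const.div (hlamm.pow_const _))).add
          (measurable_const.div (hlamm.pow_const _))
    refine lintegral_strict_mono_of_ae_le_of_ae_lt_on hgmeas ?_ h_le
      (s := Set.Ioi (T₁ ω₀ / T₂ ω₀)) ?_ ?_
    · refine ne_top_of_le_ne_top ?_ (lintegral_mono_ae h_le)
      rw [← hE0]; exact hfin
    · rw [Measure.restrict_apply measurableSet_Ioi,
        Set.inter_eq_left.mpr (Set.Ioi_subset_Ioi hv₀.le), Real.volume_Ioi]
      exact ENNReal.top_ne_zero
    · refine (ae_restrict_iff' measurableSet_Ioi).mpr (ae_of_all _ (fun v hv hvs => ?_))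
      have hv' : (0:ℝ) < v := hv
      have hvv : T₁ ω₀ / T₂ ω₀ < v := hvs
      have hact : d₀₂ < e₂ * (1 + v) := by nlinarith
      have hA0 : ENNReal.ofReal ((1/σ₁) ^ (k₁+1) * (1/σ₂) ^ (k₂+1) / ((k₁)! * (k₂)!) * v ^ k₁) ≠ 0 := by
        refine (ENNReal.ofReal_pos.mpr ?_).ne'
        positivity
      rw [ENNReal.mul_lt_mul_iff_right hA0 ENNReal.ofReal_ne_top]
      rw [ENNReal.ofReal_lt_ofReal_iff_of_nonneg
        (linexPhi_nonneg (k₁+k₂+1) (hlampos v hv') (hdomκ v hv'))]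
      rw [max_eq_right hact.le]
      exact linexPhi_strict hp hσ₂ (k₁+k₂+1) (hlampos v hv') (hdomd v hv') hact (hstar v hv')
  -- final conversion
  have hδm : Measurable (fun ω => max d₀₂ (e₂ * (1 + T₁ ω / T₂ ω)) * T₂ ω) :=
    (measurable_const.max (((hT₁.div hT₂).const_add 1).const_mul e₂)).mul hT₂
  rw [integral_eq_lintegral_of_nonneg_ae
    (ae_of_all _ (fun ω => linexLoss_nonneg p σ₂ (max d₀₂ (e₂ * (1 + T₁ ω / T₂ ω)) * T₂ ω)))
    ((hLm.comp hδm).aestronglyMeasurable),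
    integral_eq_lintegral_of_nonneg_ae (ae_of_all _ (fun ω => linexLoss_nonneg p σ₂ (d₀₂ * T₂ ω)))
    ((hLm.comp (hT₂.const_mul d₀₂)).aestronglyMeasurable)]
  have hfinal : ∫⁻ ω, ENNReal.ofReal (linexLoss p σ₂ (max d₀₂ (e₂ * (1 + T₁ ω / T₂ ω)) * T₂ ω)) ∂P
      < ∫⁻ ω, ENNReal.ofReal (linexLoss p σ₂ (d₀₂ * T₂ ω)) ∂P := by
    calc ∫⁻ ω, ENNReal.ofReal (linexLoss p σ₂ (max d₀₂ (e₂ * (1 + T₁ ω / T₂ ω)) * T₂ ω)) ∂P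
        = ∫⁻ v in Set.Ioi 0,
            ENNReal.ofReal ((1/σ₁) ^ (k₁+1) * (1/σ₂) ^ (k₂+1) / ((k₁)! * (k₂)!) * v ^ k₁)
              * ENNReal.ofReal (linexPhi p σ₂ (k₁+k₂+1) (lam v) (max d₀₂ (e₂ * (1 + v)))) := hEδ
      _ < ∫⁻ v in Set.Ioi 0,
            ENNReal.ofReal ((1/σ₁) ^ (k₁+1) * (1/σ₂) ^ (k₂+1) / ((k₁)! * (k₂)!) * v ^ k₁)
              * ENNReal.ofReal (linexPhi p σ₂ (k₁+k₂+1) (lam v) d₀₂) := hlt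
      _ = ∫⁻ ω, ENNReal.ofReal (linexLoss p σ₂ (d₀₂ * T₂ ω)) ∂P := hE0.symm
  exact ENNReal.toReal_strict_mono hfin hfinal
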